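/- For every t ∈ (0, 1/π), the inequality (π/2) · tan((1/2) · arcsin(2t)) < tanh((1/2) · artanh(π·t)) holds. -/

import Mathlib

/-- The real inverse hyperbolic tangent, `artanh x = (1/2) log((1+x)/(1-x))`. -/
noncomputable def Real.artanh' (x : ℝ) : ℝ := 1 / 2 * Real.log ((1 + x) / (1 - x))

lemma tanh_half_artanh (u : ℝ) (hu0 : 0 < u) (hu1 : u < 1) :
    Real.tanh (1 / 2 * Real.artanh' u) = u / (1 + Real.sqrt (1 - u ^ 2)) := by
  have h1u : (0:ℝ) < 1 + u := by linarith
  have h1u' : (0:ℝ) < 1 - u := by linarith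
  set a := Real.sqrt (1 + u) with ha
  set b := Real.sqrt (1 - u) with hb
  have ha2 : a ^ 2 = 1 + u := Real.sq_sqrt h1u.le
  have hb2 : b ^ 2 = 1 - u := Real.sq_sqrt h1u'.le
  have hapos : 0 < a := Real.sqrt_pos.mpr h1u
  have hbpos : 0 < b := Real.sqrt_pos.mpr h1u'
  have hab : Real.sqrt (1 - u ^ 2) = a * b := by
    rw [ha, hb, ← Real.sqrt_mul h1u.le]; ring_nf
  set y := 1 / 2 * Real.artanh' u with hy
  have hexp2y : Real.exp (2 * y) = a / b := by
    have hr : (0:ℝ) < (1 + u) / (1 - u) := div_pos h1u h1u'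
    have h2y : 2 * y = Real.log ((1 + u) / (1 - u)) * (1 / 2) := by
      rw [hy, Real.artanh']; ring
    rw [h2y, ← Real.rpow_def_of_pos hr, ← Real.sqrt_eq_rpow,
      Real.sqrt_div h1u.le, ← ha, ← hb]
  have hepos : 0 < Real.exp y := Real.exp_pos y
  have hE : Real.exp y * Real.exp (-y) = 1 := by
    rw [← Real.exp_add]; simp
  have hsq : Real.exp (2 * y) = Real.exp y * Real.exp y := by
    rw [← Real.exp_add]; ring_nf
  rw [Real.tanh_eq_sinh_div_cosh, Real.sinh_eq, Real.cosh_eq, hab]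
  have hden : 0 < 1 + a * b := by positivity
  have hcosh : 0 < Real.exp y + Real.exp (-y) := by positivity
  have hEab : Real.exp y * Real.exp y = a / b := by rw [← hsq, hexp2y]
  have hEab' : Real.exp y * Real.exp y * b = a := by
    rw [hEab]; field_simp
  rw [Real.exp_neg]
  field_simp
  nlinarith [hEab, mul_pos hapos hbpos, sq_nonneg (Real.exp y * b - a),
    sq_nonneg (Real.exp y - 1), mul_pos hepos hbpos]
  
lemma tan_half_eq (θ : ℝ) (h0 : 0 < θ) (h1 : θ < Real.pi / 2) :
    Real.tan (1 / 2 * θ) = Real.sin θ / (1 + Real.cos θ) := by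
  have hpi := Real.pi_pos
  have hc : 0 < Real.cos (1 / 2 * θ) :=
    Real.cos_pos_of_mem_Ioo ⟨by linarith, by linarith⟩
  have hs := Real.sin_two_mul (1 / 2 * θ)
  have hcc := Real.cos_two_mul (1 / 2 * θ)
  have h2 : 2 * (1 / 2 * θ) = θ := by ring
  rw [h2] at hs hcc
  rw [Real.tan_eq_sin_div_cos, hs, hcc]
  have : 1 + (2 * Real.cos (1 / 2 * θ) ^ 2 - 1) = 2 * Real.cos (1 / 2 * θ) ^ 2 := by
    ring
  rw [this]
  rw [div_eq_div_iff hc.ne' (by positivity)]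
  ring

theorem stmt2 (t : ℝ) (ht0 : 0 < t) (ht : t < 1 / Real.pi) :
    Real.pi / 2 * Real.tan (1 / 2 * Real.arcsin (2 * t)) <
      Real.tanh (1 / 2 * Real.artanh' (Real.pi * t)) := by
  have hpi := Real.pi_pos
  have hpi2 : (2:ℝ) < Real.pi := by
    have := Real.pi_gt_three; linarith
  have hu1 : Real.pi * t < 1 := by
    rw [mul_comm]; exact (lt_div_iff₀ hpi).mp ht
  have hu0 : 0 < Real.pi * t := by positivity
  have h2t1 : 2 * t < 1 := by nlinarith [mul_pos (show (0:ℝ) < Real.pi - 2 by linarith) ht0]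
  have h2t0 : 0 < 2 * t := by linarith
  -- RHS
  rw [tanh_half_artanh (Real.pi * t) hu0 hu1]
  -- LHS: arcsin
  set θ := Real.arcsin (2 * t) with hθ
  have hθ0 : 0 < θ := Real.arcsin_pos.mpr h2t0
  have hθ1 : θ < Real.pi / 2 := by
    have := Real.arcsin_lt_pi_div_two (x := 2 * t)
    rw [this]; linarith
  have hsin : Real.sin θ = 2 * t := Real.sin_arcsin (by linarith) (by linarith)
  have hcos : Real.cos θ = Real.sqrt (1 - (2 * t) ^ 2) := Real.cos_arcsin (2 * t)
  rw [tan_half_eq θ hθ0 hθ1, hsin, hcos]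
  have hlt : 4 * t ^ 2 < Real.pi ^ 2 * t ^ 2 := by
    nlinarith [mul_pos (mul_pos (show (0:ℝ) < Real.pi - 2 by linarith)
      (show (0:ℝ) < Real.pi + 2 by linarith)) (mul_pos ht0 ht0)]
  have hnn : 0 ≤ 1 - (Real.pi * t) ^ 2 := by nlinarith
  have hsqrtlt : Real.sqrt (1 - (Real.pi * t) ^ 2) < Real.sqrt (1 - (2 * t) ^ 2) := by
    apply Real.sqrt_lt_sqrt hnn
    nlinarith
  have hd1 : 0 < 1 + Real.sqrt (1 - (2 * t) ^ 2) := by positivity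
  have hd2 : 0 < 1 + Real.sqrt (1 - (Real.pi * t) ^ 2) := by positivity
  have heq : Real.pi / 2 * (2 * t / (1 + Real.sqrt (1 - (2 * t) ^ 2)))
      = Real.pi * t / (1 + Real.sqrt (1 - (2 * t) ^ 2)) := by ring
  rw [heq, div_lt_div_iff₀ hd1 hd2]
  nlinarith [mul_lt_mul_of_pos_left hsqrtlt hu0]
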